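/- arXiv:2201.12842 — 2 statements merged into one kernel-verified Lean document; each statement's English description precedes it below -/
import Mathlib

section
/- For any positive integers κ ≥ 1, any α with 1 ≤ α ≤ κ, and any multi-indices, the mixed partial derivative ∂^{m+1} F^o_{A_κ}/(∂t_α ∂t_{κ+1-β_1}...∂t_{κ+1-β_m}) evaluated at all variables 0 equals (m-1)! if m + Σ_{i=1}^m β_i = α, and 0 otherwise. In particular this value is independent of κ. -/
open MvPolynomial

/-- `F` is the genus-zero open potential of type `A_κ`, characterized by its iterated
partial derivatives at `0`. -/
def OpenAPotential (κ : ℕ) (F : MvPolynomial (Fin (κ + 1)) ℚ) : Prop :=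
  ∀ (m k : ℕ) (α : Fin m → Fin (κ + 1)), (∀ i, α i ≠ 0) →
    MvPolynomial.eval (fun _ => (0 : ℚ))
      ((List.ofFn α ++ List.replicate k (0 : Fin (κ + 1))).foldr
        (fun i p => MvPolynomial.pderiv i p) F)
    = if (∑ i, (κ + 2 - (α i : ℕ))) + k = κ + 2 then ((m + k - 2).factorial : ℚ) else 0

/-- for `1 ≤ α ≤ κ` and `1 ≤ β_i ≤ κ`, the derivative
`∂^{m+1} F^o_{A_κ}/(∂t_α ∂t_{κ+1-β_1} ⋯ ∂t_{κ+1-β_m})` at `0` equals `(m-1)!`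
if `m + ∑ β_i = α` and `0` otherwise; in particular it does not depend on `κ`. -/
theorem openA_derivatives_stable (κ : ℕ) (hκ : 1 ≤ κ)
    (F : MvPolynomial (Fin (κ + 1)) ℚ) (hF : OpenAPotential κ F)
    (m : ℕ) (hm : 1 ≤ m) (α : ℕ) (hα1 : 1 ≤ α) (hα2 : α ≤ κ)
    (β : Fin m → ℕ) (hβ : ∀ i, 1 ≤ β i ∧ β i ≤ κ) :
    MvPolynomial.eval (fun _ => (0 : ℚ))
      ((((⟨α, by omega⟩ : Fin (κ + 1)) ::
          List.ofFn (fun i => (⟨κ + 1 - β i, by have := hβ i; omega⟩ : Fin (κ + 1))))).foldr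
        (fun i p => MvPolynomial.pderiv i p) F)
    = if m + ∑ i, β i = α then ((m - 1).factorial : ℚ) else 0 := by
  have h := hF (m + 1) 0
      (Fin.cons (⟨α, by omega⟩ : Fin (κ + 1))
        (fun i => (⟨κ + 1 - β i, by have := hβ i; omega⟩ : Fin (κ + 1))))
      (by
        intro i
        refine Fin.cases ?_ ?_ i
        · simp [Fin.ext_iff]; omega
        · intro j
          simp [Fin.ext_iff]
          have := hβ j; omega)
  simp only [List.replicate, List.append_nil, List.ofFn_succ, Fin.cons_zero,
    Fin.cons_succ, Nat.add_zero] at h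
  rw [h]
  have hsum : (∑ i : Fin (m + 1),
      (κ + 2 - Fin.val ((Fin.cons (⟨α, by omega⟩ : Fin (κ + 1))
        (fun i => (⟨κ + 1 - β i, by have := hβ i; omega⟩ : Fin (κ + 1)))
        : Fin (m + 1) → Fin (κ + 1)) i)))
      = (κ + 2 - α) + (m + ∑ i, β i) := by
    rw [Fin.sum_univ_succ]
    simp only [Fin.cons_zero, Fin.cons_succ]
    congr 1
    have : ∀ i, κ + 2 - ((⟨κ + 1 - β i, by have := hβ i; omega⟩ : Fin (κ + 1)) : ℕ)
        = 1 + β i := by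
      intro i; have := hβ i; simp; omega
    rw [Finset.sum_congr rfl (fun i _ => this i), Finset.sum_add_distrib]
    simp [add_comm]
  rw [hsum]
  have hcond : ((κ + 2 - α) + (m + ∑ i, β i) = κ + 2) ↔ (m + ∑ i, β i = α) := by omega
  simp only [hcond]

  have : m + 1 - 2 = m - 1 := by omega
  rw [this]
end

section
/- Let P_{ij}(γ_1,...,γ_m) denote the number of pairs of compositions (i_1,...,i_m) of i and (j_1,...,j_m) of j with i_k + j_k = γ_k + 1 for all k. Then the coefficient of z^{-i}w^{-j} (i,j ≥ 1) in the formal power series identity e^{D(z)D(w)f} = 1 - (D(z)∂_1 f - D(w)∂_1 f)/(z-w), after the change of variables t_k → t_k/k, gives ∂_i∂_j f = Σ_{m≥1} ((-1)^{m-1}/m) Σ_{γ_1+...+γ_m = i+j-m} P_{ij}(γ_1,...,γ_m) Π_{k=1}^m ∂_1∂_{γ_k} f. -/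
open PowerSeries

variable {R : Type*} [CommRing R] [Algebra ℚ R]

/-- After the change of variables `t_k → t_k/k`, the operator `D(z)` becomes
`D(z) g = ∑_{k≥1} z^{-k} ∂_k g` (no division by `k`); here written as a power
series in `u = z^{-1}`. -/
noncomputable def Dop' (d : ℕ → R → R) (g : R) : PowerSeries R :=
  PowerSeries.mk fun n => if n = 0 then 0 else d n g

/-- `D(z)D(w) f` (in the rescaled variables), as a power series in `v = w^{-1}`
(outer variable) with coefficients power series in `u = z^{-1}` (inner variable). -/
noncomputable def DD' (d : ℕ → R → R) (f : R) : PowerSeries (PowerSeries R) :=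
  PowerSeries.mk fun n => PowerSeries.mk fun m =>
    if n = 0 ∨ m = 0 then 0 else d n (d m f)

/-- `exp` of a power series with zero constant term, defined coefficientwise. -/
noncomputable def expPS {A : Type*} [CommRing A] [Algebra ℚ A] (u : PowerSeries A) :
    PowerSeries A :=
  PowerSeries.mk fun n =>
    ∑ m ∈ Finset.range (n + 1), (1 / (m.factorial : ℚ)) • PowerSeries.coeff (R := A) n (u ^ m)

/-- Compositions of `s` into `m` positive parts. -/
def comps (m s : ℕ) : Finset (Fin m → ℕ) :=
  Finset.filter (fun γ : Fin m → ℕ => (∀ i, 1 ≤ γ i) ∧ ∑ i, γ i = s)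
    (Fintype.piFinset fun _ : Fin m => Finset.range (s + 1))

/-- `P_{ij}(γ_1,…,γ_m)`: the number of pairs of compositions `(i_1,…,i_m)` of `i`
and `(j_1,…,j_m)` of `j` (into positive parts) with `i_k + j_k = γ_k + 1` for all `k`. -/
def P (i j : ℕ) {m : ℕ} (γ : Fin m → ℕ) : ℕ :=
  (Finset.filter
    (fun p : (Fin m → ℕ) × (Fin m → ℕ) => ∀ k, p.1 k + p.2 k = γ k + 1)
    ((comps m i) ×ˢ (comps m j))).card


section AuxExpLog
open Finset
variable {A : Type*} [CommRing A] [Algebra ℚ A]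

omit [Algebra ℚ A] in
lemma coeff_pow_eq_zero {S : PowerSeries A} (hS : constantCoeff (R := A) S = 0) :
    ∀ m n : ℕ, n < m → coeff (R := A) n (S ^ m) = 0 := by
  intro m
  induction m with
  | zero => intro n hn; omega
  | succ m ih =>
    intro n hn
    rw [pow_succ, coeff_mul]
    apply Finset.sum_eq_zero
    intro p hp
    rw [Finset.HasAntidiagonal.mem_antidiagonal] at hp
    by_cases h : p.2 = 0
    · have : coeff (R := A) p.2 S = 0 := by rw [h, coeff_zero_eq_constantCoeff, hS]
      rw [this, mul_zero]
    · rw [ih p.1 (by omega), zero_mul]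

lemma coeff_expPS_eq {S : PowerSeries A} (hS : constantCoeff (R := A) S = 0) {n N : ℕ} (h : n ≤ N) :
    coeff (R := A) n (expPS S)
      = coeff (R := A) n (∑ m ∈ range (N + 1), (1 / (m.factorial : ℚ)) • S ^ m) := by
  rw [map_sum, expPS, coeff_mk]
  simp_rw [coeff_smul]
  apply Finset.sum_subset (by intro x hx; simp at hx ⊢; omega)
  intro m hm hm'
  simp only [mem_range] at hm hm'
  rw [coeff_pow_eq_zero hS m n (by omega), smul_zero]

omit [Algebra ℚ A] in
lemma coeff_mul_congr {a b c : PowerSeries A} {n : ℕ}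
    (h : ∀ k ≤ n, coeff (R := A) k a = coeff (R := A) k b) :
    coeff (R := A) n (c * a) = coeff (R := A) n (c * b) := by
  rw [coeff_mul, coeff_mul]
  apply Finset.sum_congr rfl
  intro p hp
  rw [Finset.HasAntidiagonal.mem_antidiagonal] at hp
  rw [h p.2 (by omega)]

lemma qsmul_eq_mul (q : ℚ) (x y : PowerSeries A) : (q • x) * y = q • (x * y) := by
  rw [Algebra.smul_def, Algebra.smul_def, mul_assoc]

lemma derivative_qsmul (q : ℚ) (x : PowerSeries A) :
    d⁄dX A (q • x) = q • d⁄dX A x := by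
  rw [Algebra.smul_def, Algebra.smul_def, PowerSeries.algebraMap_apply,
    Derivation.leibniz, derivative_C, smul_zero, add_zero, smul_eq_mul]

lemma derivative_partial_exp (S : PowerSeries A) (N : ℕ) :
    d⁄dX A (∑ m ∈ range (N + 1), (1 / (m.factorial : ℚ)) • S ^ m)
      = (∑ m ∈ range N, (1 / (m.factorial : ℚ)) • S ^ m) * d⁄dX A S := by
  rw [map_sum, Finset.sum_range_succ']
  have h0 : d⁄dX A ((1 / (Nat.factorial 0 : ℚ)) • S ^ 0) = 0 := by
    simp [derivative_qsmul]
  rw [h0, add_zero, Finset.sum_mul]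
  apply Finset.sum_congr rfl
  intro m hm
  rw [derivative_qsmul, Derivation.leibniz_pow]
  have h1 : (m + 1) • S ^ (m + 1 - 1) • d⁄dX A S = ((m+1 : ℕ) : ℚ) • (S ^ m * d⁄dX A S) := by
    rw [Nat.cast_smul_eq_nsmul]
    simp [smul_eq_mul]
  rw [h1, smul_smul, qsmul_eq_mul]
  congr 1
  rw [Nat.factorial_succ, Nat.cast_mul]
  have hm0 : ((m.factorial : ℚ)) ≠ 0 := Nat.cast_ne_zero.2 m.factorial_ne_zero
  field_simp

lemma derivative_expPS {S : PowerSeries A} (hS : constantCoeff (R := A) S = 0) :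
    d⁄dX A (expPS S) = d⁄dX A S * expPS S := by
  ext n
  rw [coeff_derivative, coeff_expPS_eq hS (Nat.le_refl (n+1)),
    ← coeff_derivative, derivative_partial_exp]
  rw [mul_comm]
  apply coeff_mul_congr
  intro k hk
  exact (coeff_expPS_eq hS (by omega)).symm

noncomputable def logPS (T : PowerSeries A) : PowerSeries A :=
  PowerSeries.mk fun n =>
    ∑ m ∈ Finset.Icc 1 n, (((-1 : ℚ) ^ (m - 1)) / m) • PowerSeries.coeff (R := A) n (T ^ m)

lemma constantCoeff_logPS (T : PowerSeries A) : constantCoeff (R := A) (logPS T) = 0 := by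
  rw [← coeff_zero_eq_constantCoeff, logPS, coeff_mk]
  simp

lemma coeff_logPS_eq {T : PowerSeries A} (hT : constantCoeff (R := A) T = 0) {n N : ℕ} (h : n ≤ N) :
    coeff (R := A) n (logPS T)
      = coeff (R := A) n (∑ m ∈ Finset.Icc 1 N, (((-1 : ℚ) ^ (m - 1)) / m) • T ^ m) := by
  rw [map_sum, logPS, coeff_mk]
  simp_rw [coeff_smul]
  apply Finset.sum_subset (by intro x hx; simp at hx ⊢; omega)
  intro m hm hm'
  simp only [Finset.mem_Icc] at hm hm'
  rw [coeff_pow_eq_zero hT m n (by omega), smul_zero]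

lemma qneg_one_pow_smul (m : ℕ) (x : PowerSeries A) :
    ((-1 : ℚ) ^ m) • x = (-1 : PowerSeries A) ^ m * x := by
  rw [Algebra.smul_def, map_pow, map_neg, map_one]

lemma derivative_partial_log (T : PowerSeries A) (N : ℕ) :
    d⁄dX A (∑ m ∈ Finset.Icc 1 N, (((-1 : ℚ) ^ (m - 1)) / m) • T ^ m)
      = (∑ r ∈ range N, (-T) ^ r) * d⁄dX A T := by
  have : Finset.Icc 1 N = Finset.map ⟨fun r => r + 1, show Function.Injective (fun r : ℕ => r + 1) from fun a b h => by simpa using h⟩ (range N) := by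
    ext x
    simp only [Finset.mem_map, Finset.mem_Icc, Finset.mem_range, Function.Embedding.coeFn_mk]
    constructor
    · rintro ⟨h1, h2⟩; exact ⟨x - 1, by omega, by omega⟩
    · rintro ⟨a, ha, rfl⟩; omega
  rw [map_sum, this, Finset.sum_map, Finset.sum_mul]
  apply Finset.sum_congr rfl
  intro r hr
  simp only [Function.Embedding.coeFn_mk, Nat.add_sub_cancel]
  rw [derivative_qsmul, Derivation.leibniz_pow]
  have h1 : (r + 1) • T ^ (r + 1 - 1) • d⁄dX A T = ((r+1 : ℕ) : ℚ) • (T ^ r * d⁄dX A T) := by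
    rw [Nat.cast_smul_eq_nsmul]
    simp [smul_eq_mul]
  rw [h1, smul_smul]
  have h2 : ((-1 : ℚ) ^ r / (r+1 : ℕ)) * ((r+1 : ℕ) : ℚ) = (-1 : ℚ) ^ r := by
    have : ((r+1 : ℕ) : ℚ) ≠ 0 := by positivity
    field_simp
  rw [h2, qneg_one_pow_smul, neg_pow, ← mul_assoc]
  ring

lemma one_add_mul_derivative_logPS {T : PowerSeries A} (hT : constantCoeff (R := A) T = 0) :
    (1 + T) * d⁄dX A (logPS T) = d⁄dX A T := by
  ext n
  have hgeom : (1 + T) * (∑ r ∈ range (n + 1), (-T) ^ r) = 1 - (-T) ^ (n + 1) := by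
    have := geom_sum_mul (-T) (n + 1)
    linear_combination -this
  calc coeff (R := A) n ((1 + T) * d⁄dX A (logPS T))
      = coeff (R := A) n ((1 + T) * ((∑ r ∈ range (n + 1), (-T) ^ r) * d⁄dX A T)) := by
        apply coeff_mul_congr
        intro k hk
        rw [coeff_derivative, coeff_logPS_eq hT (show k + 1 ≤ n + 1 by omega),
          ← coeff_derivative, derivative_partial_log]
    _ = coeff (R := A) n ((1 - (-T) ^ (n + 1)) * d⁄dX A T) := by rw [← mul_assoc, hgeom]
    _ = coeff (R := A) n (d⁄dX A T) := by
        rw [sub_mul, one_mul, map_sub]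
        have : coeff (R := A) n ((-T) ^ (n + 1) * d⁄dX A T) = 0 := by
          rw [coeff_mul]
          apply Finset.sum_eq_zero
          intro p hp
          rw [Finset.HasAntidiagonal.mem_antidiagonal] at hp
          rw [coeff_pow_eq_zero (by simp [hT]) (n + 1) p.1 (by omega), zero_mul]
        rw [this, sub_zero]

omit [Algebra ℚ A] in
lemma eq_zero_of_regular_mul {φ g : PowerSeries A}
    (hreg : ∀ x : A, constantCoeff (R := A) φ * x = 0 → x = 0) (h : φ * g = 0) : g = 0 := by
  ext n
  induction n using Nat.strong_induction_on with
  | _ n ih =>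
    have h0 : coeff (R := A) n (φ * g) = 0 := by rw [h]; simp
    rw [coeff_mul] at h0
    have : ∑ p ∈ antidiagonal n, coeff (R := A) p.1 φ * coeff (R := A) p.2 g
        = constantCoeff (R := A) φ * coeff (R := A) n g := by
      rw [Finset.sum_eq_single (0, n)]
      · rw [coeff_zero_eq_constantCoeff]
      · intro p hp hne
        rw [Finset.HasAntidiagonal.mem_antidiagonal] at hp
        have : p.2 < n := by
          rcases p with ⟨p1, p2⟩
          simp at hp hne ⊢
          omega
        rw [ih p.2 this]
        simp
      · intro hmem
        simp at hmem
    rw [this] at h0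
    simpa using hreg _ h0

lemma nat_succ_smul_cancel {x : A} {n : ℕ} (h : x * ((n : A) + 1) = 0) : x = 0 := by
  have h2 : x * (algebraMap ℚ A ((n : ℚ) + 1)) = 0 := by
    rw [map_add, map_natCast, map_one]
    exact_mod_cast h
  have h3 := congrArg (fun y => y * (algebraMap ℚ A ((n : ℚ) + 1)⁻¹)) h2
  simp only [mul_assoc, ← map_mul, zero_mul] at h3
  rw [mul_inv_cancel₀ (by positivity), map_one, mul_one] at h3
  exact h3

lemma ode_zero {T D : PowerSeries A} (hT : constantCoeff (R := A) T = 0)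
    (hD0 : constantCoeff (R := A) D = 0)
    (hode : (1 + T) * d⁄dX A D = d⁄dX A T * D) : D = 0 := by
  ext n
  induction n using Nat.strong_induction_on with
  | _ n ih =>
    match n with
    | 0 => simpa [coeff_zero_eq_constantCoeff] using hD0
    | n + 1 =>
      have hc := congrArg (coeff (R := A) n) hode
      rw [add_mul, one_mul, map_add, coeff_mul, coeff_mul] at hc
      have hTd : ∑ p ∈ antidiagonal n, coeff (R := A) p.1 T * coeff (R := A) p.2 (d⁄dX A D) = 0 := by
        apply Finset.sum_eq_zero
        intro p hp
        rw [Finset.HasAntidiagonal.mem_antidiagonal] at hp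
        by_cases h1 : p.1 = 0
        · rw [h1, coeff_zero_eq_constantCoeff, hT, zero_mul]
        · rw [coeff_derivative]
          have : coeff (R := A) (p.2 + 1) D = 0 := by
            have := ih (p.2 + 1) (by omega); simpa using this
          rw [this, zero_mul, mul_zero]
      have hrhs : ∑ p ∈ antidiagonal n, coeff (R := A) p.1 (d⁄dX A T) * coeff (R := A) p.2 D = 0 := by
        apply Finset.sum_eq_zero
        intro p hp
        rw [Finset.HasAntidiagonal.mem_antidiagonal] at hp
        have : coeff (R := A) p.2 D = 0 := by
          match n, hp with
          | _, rfl => 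
            by_cases h2 : p.2 = 0
            · rw [h2, coeff_zero_eq_constantCoeff, hD0]
            · have := ih p.2 (by omega); simpa using this
        rw [this, mul_zero]
      rw [hTd, add_zero, hrhs, coeff_derivative] at hc
      simpa using nat_succ_smul_cancel (by exact_mod_cast hc)

lemma coeff_zero_expPS (S : PowerSeries A) : constantCoeff (R := A) (expPS S) = 1 := by
  rw [← coeff_zero_eq_constantCoeff, expPS, coeff_mk]
  simp

lemma expPS_logPS {T : PowerSeries A} (hT : constantCoeff (R := A) T = 0) :
    expPS (logPS T) = 1 + T := by
  have hL0 : constantCoeff (R := A) (logPS T) = 0 := constantCoeff_logPS T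
  have hD0 : constantCoeff (R := A) (expPS (logPS T) - (1 + T)) = 0 := by
    rw [map_sub, coeff_zero_expPS, map_add, map_one, hT]
    ring
  have hode : (1 + T) * d⁄dX A (expPS (logPS T) - (1 + T))
      = d⁄dX A T * (expPS (logPS T) - (1 + T)) := by
    rw [map_sub, map_add, Derivation.map_one_eq_zero, zero_add, derivative_expPS hL0]
    linear_combination expPS (logPS T) * (one_add_mul_derivative_logPS hT)
  have h0 := ode_zero hT hD0 hode
  linear_combination h0

lemma expPS_inj {S S' : PowerSeries A} (hS : constantCoeff (R := A) S = 0)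
    (hS' : constantCoeff (R := A) S' = 0) (h : expPS S = expPS S') : S = S' := by
  have hd : d⁄dX A S * expPS S = d⁄dX A S' * expPS S := by
    rw [← derivative_expPS hS, h, derivative_expPS hS']
  have hsub : expPS S * (d⁄dX A S - d⁄dX A S') = 0 := by ring_nf; linear_combination hd
  have hz : d⁄dX A S - d⁄dX A S' = 0 := by
    apply eq_zero_of_regular_mul (φ := expPS S) _ hsub
    intro x hx
    rw [coeff_zero_expPS, one_mul] at hx
    exact hx
  ext n
  match n with
  | 0 => rw [coeff_zero_eq_constantCoeff, hS, hS']
  | n + 1 =>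
    have := congrArg (coeff (R := A) n) hz
    rw [map_sub, coeff_derivative, coeff_derivative] at this
    simp only [map_zero] at this
    have h2 : (coeff (R := A) (n+1) S - coeff (R := A) (n+1) S') * ((n : A) + 1) = 0 := by
      ring_nf
      ring_nf at this
      linear_combination this
    exact sub_eq_zero.mp (nat_succ_smul_cancel h2)

end AuxExpLog

section AuxComb
open Finset
lemma mem_comps {m s : ℕ} {γ : Fin m → ℕ} :
    γ ∈ comps m s ↔ (∀ i, 1 ≤ γ i) ∧ ∑ i, γ i = s := by
  simp only [comps, Finset.mem_filter, Fintype.mem_piFinset, Finset.mem_range]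
  constructor
  · tauto
  · rintro ⟨h1, h2⟩
    refine ⟨fun a => ?_, h1, h2⟩
    have : γ a ≤ ∑ i, γ i := Finset.single_le_sum (fun i _ => Nat.zero_le _) (Finset.mem_univ a)
    omega

lemma comps_eq_empty {m s : ℕ} (h : s < m) : comps m s = ∅ := by
  ext γ
  simp only [mem_comps, Finset.notMem_empty, iff_false, not_and]
  intro h1
  have : (m : ℕ) ≤ ∑ i, γ i := by
    calc (m : ℕ) = ∑ _i : Fin m, 1 := by simp
    _ ≤ ∑ i, γ i := Finset.sum_le_sum fun i _ => h1 i
  omega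

lemma P_eq_zero {i j m : ℕ} (γ : Fin m → ℕ) (h : i < m ∨ j < m) : P i j γ = 0 := by
  rcases h with h | h <;>
    simp [P, comps_eq_empty h]

/-- The finsupp associated to a tuple. -/
noncomputable def toF {m : ℕ} (a : Fin m → ℕ) : ℕ →₀ ℕ :=
  Finsupp.onFinset (range m) (fun k => if h : k < m then a ⟨k, h⟩ else 0)
    (fun k hk => by by_contra hc; simp [Finset.mem_range] at hc; simp [hc] at hk)

section Ring
variable {R : Type*} [CommRing R] (g : ℕ → R)

/-- abstract T -/
noncomputable def TT (g : ℕ → R) : PowerSeries (PowerSeries R) :=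
  PowerSeries.mk fun n => PowerSeries.mk fun m =>
    if n = 0 ∨ m = 0 then 0 else g (n + m - 1)

lemma coeff_coeff_TT (n m : ℕ) :
    coeff (R := R) m (coeff (R := (PowerSeries R)) n (TT g)) = if n = 0 ∨ m = 0 then 0 else g (n + m - 1) := by
  simp [TT, coeff_mk]

lemma constantCoeff_TT : constantCoeff (R := (PowerSeries R)) (TT g) = 0 := by
  rw [← coeff_zero_eq_constantCoeff]
  ext m
  simp [TT, coeff_mk]

lemma coeff_coeff_TT_pow (m i j : ℕ) :
    coeff (R := R) j (coeff (R := (PowerSeries R)) i ((TT g) ^ m))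
      = ∑ p ∈ comps m i ×ˢ comps m j, ∏ k, g (p.1 k + p.2 k - 1) := by
  rw [PowerSeries.coeff_pow, map_sum]
  have step1 : ∀ l : ℕ →₀ ℕ,
      coeff (R := R) j (∏ k ∈ range m, coeff (R := (PowerSeries R)) (l k) (TT g))
        = ∑ l' ∈ finsuppAntidiag (range m) j,
            ∏ k ∈ range m, coeff (R := R) (l' k) (coeff (R := (PowerSeries R)) (l k) (TT g)) := by
    intro l
    rw [PowerSeries.coeff_prod]
  simp_rw [step1]
  rw [← Finset.sum_product']
  rw [← Finset.sum_filter_of_ne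
    (p := fun q : (ℕ →₀ ℕ) × (ℕ →₀ ℕ) => ∀ k ∈ range m, q.1 k ≠ 0 ∧ q.2 k ≠ 0)
    (by
      intro q hq hval k hk
      by_contra hc
      apply hval
      apply Finset.prod_eq_zero hk
      rw [coeff_coeff_TT]
      rw [not_and_or, not_not, not_not] at hc
      rcases hc with hc | hc <;> simp [hc])]
  apply Finset.sum_nbij' (i := fun q : (ℕ →₀ ℕ) × (ℕ →₀ ℕ) =>
      ((fun k : Fin m => q.1 k), (fun k : Fin m => q.2 k)))
    (j := fun p : (Fin m → ℕ) × (Fin m → ℕ) => (toF p.1, toF p.2))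
  · -- hi: membership forward
    intro q hq
    simp only [Finset.mem_filter, Finset.mem_product, mem_finsuppAntidiag] at hq
    obtain ⟨⟨⟨hq1s, hq1su⟩, ⟨hq2s, hq2su⟩⟩, hpos⟩ := hq
    simp only [Finset.mem_product, mem_comps]
    refine ⟨⟨fun k => ?_, ?_⟩, ⟨fun k => ?_, ?_⟩⟩
    · have := (hpos k (by simp [Finset.mem_range, k.isLt])).1; omega
    · rw [Fin.sum_univ_eq_sum_range (fun k => q.1 k) m]; exact hq1s
    · have := (hpos k (by simp [Finset.mem_range, k.isLt])).2; omega
    · rw [Fin.sum_univ_eq_sum_range (fun k => q.2 k) m]; exact hq2s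
  · -- hj: membership backward
    intro p hp
    simp only [Finset.mem_product, mem_comps] at hp
    obtain ⟨⟨hp1, hp1s⟩, ⟨hp2, hp2s⟩⟩ := hp
    simp only [Finset.mem_filter, Finset.mem_product, mem_finsuppAntidiag]
    refine ⟨⟨⟨?_, ?_⟩, ⟨?_, ?_⟩⟩, ?_⟩
    · rw [← hp1s, ← Fin.sum_univ_eq_sum_range (fun k => toF p.1 k) m]
      apply Finset.sum_congr rfl
      intro k _
      simp [toF, Finsupp.onFinset_apply, k.isLt]
    · exact Finsupp.support_onFinset_subset
    · rw [← hp2s, ← Fin.sum_univ_eq_sum_range (fun k => toF p.2 k) m]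
      apply Finset.sum_congr rfl
      intro k _
      simp [toF, Finsupp.onFinset_apply, k.isLt]
    · exact Finsupp.support_onFinset_subset
    · intro k hk
      rw [Finset.mem_range] at hk
      constructor
      · simp only [toF, Finsupp.onFinset_apply, dif_pos hk]
        have := hp1 ⟨k, hk⟩; omega
      · simp only [toF, Finsupp.onFinset_apply, dif_pos hk]
        have := hp2 ⟨k, hk⟩; omega
  · -- left_inv
    intro q hq
    simp only [Finset.mem_filter, Finset.mem_product, mem_finsuppAntidiag] at hq
    obtain ⟨⟨⟨hq1s, hq1su⟩, ⟨hq2s, hq2su⟩⟩, hpos⟩ := hq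
    have key : ∀ (x : ℕ →₀ ℕ), x.support ⊆ range m → toF (fun k : Fin m => x k) = x := by
      intro x hx
      ext k
      simp only [toF, Finsupp.onFinset_apply]
      by_cases hk : k < m
      · simp [hk]
      · rw [dif_neg hk]
        by_contra hc
        have : k ∈ x.support := Finsupp.mem_support_iff.2 fun h => hc h.symm
        have := hx this
        rw [Finset.mem_range] at this
        omega
    rw [key q.1 hq1su, key q.2 hq2su]
  · -- right_inv
    intro p hp
    have h1 : (fun k : Fin m => toF p.1 k) = p.1 := by
      funext k; simp [toF, Finsupp.onFinset_apply, k.isLt]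
    have h2 : (fun k : Fin m => toF p.2 k) = p.2 := by
      funext k; simp [toF, Finsupp.onFinset_apply, k.isLt]
    rw [h1, h2]
  · -- values
    intro q hq
    simp only [Finset.mem_filter, Finset.mem_product, mem_finsuppAntidiag] at hq
    obtain ⟨⟨⟨hq1s, hq1su⟩, ⟨hq2s, hq2su⟩⟩, hpos⟩ := hq
    rw [← Fin.prod_univ_eq_prod_range (fun k => coeff (R := R) (q.2 k) (coeff (R := (PowerSeries R)) (q.1 k) (TT g))) m]
    apply Finset.prod_congr rfl
    intro k _
    rw [coeff_coeff_TT]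
    have h1 := (hpos k (by simp [Finset.mem_range, k.isLt])).1
    have h2 := (hpos k (by simp [Finset.mem_range, k.isLt])).2
    rw [if_neg (by tauto)]

end Ring

section Ring2
variable {R : Type*} [CommRing R] (g : ℕ → R)

lemma regroup (m i j : ℕ) :
    ∑ p ∈ comps m i ×ˢ comps m j, ∏ k, g (p.1 k + p.2 k - 1)
      = ∑ γ ∈ comps m (i + j - m), (P i j γ) • ∏ k, g (γ k) := by
  by_cases hm : i < m ∨ j < m
  · rcases hm with h | h <;>
    · rw [show comps m i ×ˢ comps m j = ∅ by simp [comps_eq_empty h], Finset.sum_empty]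
      rw [Finset.sum_congr rfl (fun γ _ => by rw [P_eq_zero γ (by omega), zero_smul])]
      simp
  push_neg at hm
  have hmaps : ∀ p ∈ comps m i ×ˢ comps m j,
      (fun k => p.1 k + p.2 k - 1) ∈ comps m (i + j - m) := by
    intro p hp
    simp only [Finset.mem_product, mem_comps] at hp
    obtain ⟨⟨hp1, hp1s⟩, ⟨hp2, hp2s⟩⟩ := hp
    rw [mem_comps]
    constructor
    · intro k; have := hp1 k; have := hp2 k; omega
    · have key : ∑ k, (p.1 k + p.2 k - 1) + ∑ _k : Fin m, 1
          = ∑ k, (p.1 k + p.2 k) := by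
        rw [← Finset.sum_add_distrib]
        apply Finset.sum_congr rfl
        intro k _
        have := hp1 k; omega
      rw [Finset.sum_add_distrib, hp1s, hp2s] at key
      simp only [Finset.sum_const, Finset.card_univ, Fintype.card_fin, smul_eq_mul,
        mul_one] at key
      omega
  rw [← Finset.sum_fiberwise_of_maps_to hmaps (fun p => ∏ k, g (p.1 k + p.2 k - 1))]
  apply Finset.sum_congr rfl
  intro γ hγ
  have hfib : ∀ p ∈ (comps m i ×ˢ comps m j).filter
      (fun p => (fun k => p.1 k + p.2 k - 1) = γ),
      ∏ k, g (p.1 k + p.2 k - 1) = ∏ k, g (γ k) := by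
    intro p hp
    rw [Finset.mem_filter] at hp
    apply Finset.prod_congr rfl
    intro k _
    rw [congrFun hp.2 k]
  rw [Finset.sum_congr rfl hfib, Finset.sum_const, P]
  have hset : (comps m i ×ˢ comps m j).filter
        (fun p => (fun k => p.1 k + p.2 k - 1) = γ)
      = (comps m i ×ˢ comps m j).filter
        (fun p : (Fin m → ℕ) × (Fin m → ℕ) => ∀ k, p.1 k + p.2 k = γ k + 1) := by
    apply Finset.filter_congr
    intro p hp
    simp only [Finset.mem_product, mem_comps] at hp
    obtain ⟨⟨hp1, hp1s⟩, ⟨hp2, hp2s⟩⟩ := hp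
    constructor
    · intro h k
      have := congrFun h k
      have := hp1 k; have := hp2 k
      omega
    · intro h
      funext k
      have := h k
      omega
  rw [hset]

end Ring2
end AuxComb


open Finset in
omit [Algebra ℚ R] in
lemma keyId (d : ℕ → R → R) (f : R)
    (hcomm : ∀ k l x, d k (d l x) = d l (d k x)) :
    (PowerSeries.X - PowerSeries.C (R := PowerSeries R) PowerSeries.X)
        * (1 + TT (fun n => d 1 (d n f)))
      = (PowerSeries.X - PowerSeries.C (R := PowerSeries R) PowerSeries.X)
          - PowerSeries.X * PowerSeries.C (R := PowerSeries R) PowerSeries.X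
              * (PowerSeries.C (R := PowerSeries R) (Dop' d (d 1 f))
                  - PowerSeries.map (PowerSeries.C (R := R)) (Dop' d (d 1 f))) := by
  set T := TT (fun n => d 1 (d n f)) with hT
  set A' := Dop' d (d 1 f) with hA'
  have hT0 : coeff (R := (PowerSeries R)) 0 T = 0 := by
    ext m; simp [hT, TT, coeff_mk]
  have hT1 : coeff (R := (PowerSeries R)) 1 T = A' := by
    ext m
    simp only [hT, TT, coeff_mk, hA', Dop', one_ne_zero, false_or]
    rcases m with _ | m
    · simp
    · simp [hcomm]
  apply PowerSeries.ext
  intro n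
  rw [sub_mul, mul_assoc]
  rw [map_sub, map_sub, map_sub]
  rcases n with _ | n
  · rw [coeff_zero_X_mul, coeff_zero_X_mul, coeff_C_mul, map_add, hT0, coeff_one]
    simp
  · rw [coeff_succ_X_mul, coeff_succ_X_mul, coeff_C_mul, map_add, map_add, coeff_one,
      coeff_one, coeff_C_mul, map_sub, coeff_C, coeff_map]
    rcases n with _ | n
    · rw [hT0, hT1]
      have hA'0 : coeff (R := R) 0 A' = 0 := by simp [hA', Dop', coeff_mk]
      simp [hA'0]
    · have h2 : coeff (R := (PowerSeries R)) (n + 1) T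
          = PowerSeries.X * coeff (R := (PowerSeries R)) (n + 2) T
            + PowerSeries.X * PowerSeries.C (R := R) (coeff (R := R) (n + 1) A') := by
        ext i
        rcases i with _ | i
        · simp [hT, TT, coeff_mk]
        · rw [map_add, coeff_succ_X_mul, coeff_succ_X_mul, coeff_C]
          simp only [hT, TT, coeff_mk, hA', Dop']
          rcases i with _ | i
          · simp [hcomm]
          · have : n + 1 + (i + 1 + 1) - 1 = n + 2 + (i + 1) - 1 := by omega
            simp [this]
      rw [h2]
      have hX : coeff (R := (PowerSeries R)) (n + 2) PowerSeries.X = 0 := by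
        rw [coeff_X]; simp
      have hC : coeff (R := (PowerSeries R)) (n + 1) (PowerSeries.C (R := PowerSeries R) A') = 0 := by
        rw [coeff_C]; simp
      rw [hX, hC]
      simp only [Nat.succ_ne_zero, if_false, Nat.add_eq_zero, and_false]
      ring

/-- extracting the coefficient of `z^{-i} w^{-j}` from the
dispersionless KP Fay identity `e^{D(z)D(w)f} = 1 - (D(z)∂_1f - D(w)∂_1f)/(z-w)`
(stated in denominator-cleared form, after the change of variables `t_k → t_k/k`)
yields the flows
`∂_i∂_j f = ∑_{m≥1} ((-1)^{m-1}/m) ∑_{γ_1+⋯+γ_m=i+j-m} P_{ij}(γ) ∏_k ∂_1∂_{γ_k} f`. -/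
theorem KP_Fay_flows (d : ℕ → R → R) (f : R)
    (hcomm : ∀ k l x, d k (d l x) = d l (d k x))
    (hFay : (PowerSeries.X - PowerSeries.C (R := PowerSeries R) PowerSeries.X) * expPS (DD' d f)
        = (PowerSeries.X - PowerSeries.C (R := PowerSeries R) PowerSeries.X)
          - PowerSeries.X * PowerSeries.C (R := PowerSeries R) PowerSeries.X
              * (PowerSeries.C (R := PowerSeries R) (Dop' d (d 1 f))
                  - PowerSeries.map (PowerSeries.C (R := R)) (Dop' d (d 1 f)))) :
    ∀ i j, 1 ≤ i → 1 ≤ j →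
      d i (d j f)
        = ∑ m ∈ Finset.Icc 1 (i + j), ∑ γ ∈ comps m (i + j - m),
            (((-1 : ℚ) ^ (m - 1) / (m : ℚ)) * (P i j γ : ℚ)) • ∏ k, d 1 (d (γ k) f) := by
  intro i j hi hj
  have hT0 : constantCoeff (R := (PowerSeries R)) (TT (fun n => d 1 (d n f))) = 0 :=
    constantCoeff_TT _
  have hId := keyId d f hcomm
  have h1 : (PowerSeries.X - PowerSeries.C (R := PowerSeries R) PowerSeries.X)
      * (expPS (DD' d f) - (1 + TT (fun n => d 1 (d n f)))) = 0 := by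
    rw [mul_sub, hFay, hId]
    ring
  have hreg : ∀ x : PowerSeries R,
      constantCoeff (R := PowerSeries R)
        (PowerSeries.X - PowerSeries.C (R := PowerSeries R) PowerSeries.X) * x = 0 → x = 0 := by
    intro x hx
    have hcc : constantCoeff (R := PowerSeries R)
        (PowerSeries.X - PowerSeries.C (R := PowerSeries R) PowerSeries.X) = -PowerSeries.X := by
      rw [map_sub, constantCoeff_X, constantCoeff_C]
      ring
    rw [hcc, neg_mul, neg_eq_zero] at hx
    ext k
    have := congrArg (coeff (R := R) (k + 1)) hx
    rw [coeff_succ_X_mul] at this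
    simpa using this
  have hE : expPS (DD' d f) = 1 + TT (fun n => d 1 (d n f)) := by
    have := eq_zero_of_regular_mul hreg h1
    linear_combination this
  have hDD0 : constantCoeff (R := (PowerSeries R)) (DD' d f) = 0 := by
    rw [← coeff_zero_eq_constantCoeff]
    ext m
    simp [DD', coeff_mk]
  have hlog : DD' d f = logPS (TT (fun n => d 1 (d n f))) :=
    expPS_inj hDD0 (constantCoeff_logPS _) (by rw [hE, expPS_logPS hT0])
  have hstart : d i (d j f) = coeff (R := R) j (coeff (R := (PowerSeries R)) i (DD' d f)) := by
    simp only [DD', coeff_mk]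
    rw [if_neg (by omega)]
  rw [hstart, hlog, logPS, coeff_mk, map_sum]
  simp_rw [coeff_smul]
  simp_rw [coeff_coeff_TT_pow]
  have hre : ∀ m : ℕ, ∑ p ∈ comps m i ×ˢ comps m j, ∏ k, d 1 (d (p.1 k + p.2 k - 1) f)
      = ∑ γ ∈ comps m (i + j - m), (P i j γ) • ∏ k, d 1 (d (γ k) f) :=
    fun m => regroup (fun n => d 1 (d n f)) m i j
  simp_rw [hre]
  simp_rw [Finset.smul_sum]
  simp_rw [← Nat.cast_smul_eq_nsmul ℚ]
  simp_rw [smul_smul]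
  apply Finset.sum_subset
  · intro x hx
    rw [Finset.mem_Icc] at hx ⊢
    omega
  · intro m hm hm'
    simp only [Finset.mem_Icc] at hm hm'
    apply Finset.sum_eq_zero
    intro γ _
    rw [P_eq_zero γ (Or.inl (by omega))]
    simp
end
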